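/- Let N be a positive integer, R > 0, and let g : ℝ → ℝ be convex on (0, R] with g(r) → 0 as r → 0⁺. Suppose that at every r ∈ (0, R) the function g has a right derivative belonging to {k/N : k ∈ ℕ} (i.e., there exists a natural number k such that g has derivative k/N within (r, ∞) at r). If there exist R' ∈ (0, R] and d > 0 with g(R') < d, then g(r) = 0 for every r ∈ (0, R' − N·d] (whenever R' − N·d > 0). -/

import Mathlib

open Filter Set

private lemma slope_tendsto_aux {g : ℝ → ℝ}
    (hlim : Tendsto g (nhdsWithin 0 (Set.Ioi 0)) (nhds 0)) {b : ℝ} (hb : 0 < b) :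
    Tendsto (fun s => (g b - g s) / (b - s)) (nhdsWithin 0 (Set.Ioi 0)) (nhds (g b / b)) := by
  have h1 : Tendsto (fun s : ℝ => g b - g s) (nhdsWithin 0 (Set.Ioi 0)) (nhds (g b - 0)) :=
    tendsto_const_nhds.sub hlim
  have h2 : Tendsto (fun s : ℝ => b - s) (nhdsWithin 0 (Set.Ioi 0)) (nhds (b - 0)) :=
    tendsto_const_nhds.sub (Filter.tendsto_id.mono_left nhdsWithin_le_nhds)
  have h3 := h1.div h2 (by simpa using hb.ne')
  rw [sub_zero, sub_zero] at h3
  exact h3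

/-- Right derivative of a convex function is at most the slope to a point on the right. -/
private lemma deriv_le_slope {R : ℝ} {g : ℝ → ℝ} (hconv : ConvexOn ℝ (Set.Ioc 0 R) g)
    {b c m : ℝ} (hb : b ∈ Set.Ioo 0 R) (hc : c ∈ Set.Ioc 0 R) (hbc : b < c)
    (hm : HasDerivWithinAt g m (Set.Ioi b) b) :
    m ≤ (g c - g b) / (c - b) := by
  rw [hasDerivWithinAt_iff_tendsto_slope, diff_singleton_eq_self (by simp)] at hm
  refine le_of_tendsto hm ?_
  filter_upwards [Ioo_mem_nhdsGT_of_mem ⟨le_refl b, hbc⟩] with t ht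
  rw [slope_def_field]
  exact hconv.secant_mono ⟨hb.1, hb.2.le⟩ ⟨hb.1.trans ht.1, ht.2.le.trans hc.2⟩ hc
    (ne_of_gt ht.1) (ne_of_gt hbc) ht.2.le

/-- Slope from a point on the left is at most the right derivative of a convex function. -/
private lemma slope_le_deriv {R : ℝ} {g : ℝ → ℝ} (hconv : ConvexOn ℝ (Set.Ioc 0 R) g)
    {a b m : ℝ} (ha : a ∈ Set.Ioc 0 R) (hb : b ∈ Set.Ioo 0 R) (hab : a < b)
    (hm : HasDerivWithinAt g m (Set.Ioi b) b) :
    (g b - g a) / (b - a) ≤ m := by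
  rw [hasDerivWithinAt_iff_tendsto_slope, diff_singleton_eq_self (by simp)] at hm
  refine ge_of_tendsto hm ?_
  filter_upwards [Ioo_mem_nhdsGT_of_mem ⟨le_refl b, hb.2⟩] with t ht
  rw [slope_def_field]
  have key := hconv.secant_mono ⟨hb.1, hb.2.le⟩ ha ⟨hb.1.trans ht.1, ht.2.le⟩
    (ne_of_lt hab) (ne_of_gt ht.1) (hab.le.trans ht.1.le)
  have heq : (g b - g a) / (b - a) = (g a - g b) / (a - b) := by
    rw [← neg_div_neg_eq]; ring_nf
  rw [heq]; exact key

/-- A convex function `g` on `(0,R]` tending to `0` at `0⁺` whose right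
derivatives all lie in `{k/N : k ∈ ℕ}` and which satisfies `g R' < d` must vanish on
`(0, R' - N·d]`. -/
theorem stmt_9 (N : ℕ) (hN : 0 < N) (R : ℝ) (hR : 0 < R) (g : ℝ → ℝ)
    (hconv : ConvexOn ℝ (Set.Ioc 0 R) g)
    (hlim : Tendsto g (nhdsWithin 0 (Set.Ioi 0)) (nhds 0))
    (hslope : ∀ r ∈ Set.Ioo 0 R, ∃ k : ℕ,
      HasDerivWithinAt g ((k : ℝ) / N) (Set.Ioi r) r)
    (R' : ℝ) (hR' : R' ∈ Set.Ioc 0 R) (d : ℝ) (hd : 0 < d) (hgR' : g R' < d) :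
    ∀ r ∈ Set.Ioc 0 (R' - N * d), g r = 0 := by
  obtain ⟨hR'0, hR'R⟩ := hR'
  have hN' : (0:ℝ) < N := by exact_mod_cast hN
  have hNd : 0 < (N:ℝ) * d := by positivity
  -- nonnegativity of g on (0, R)
  have hnonneg : ∀ x ∈ Set.Ioo 0 R, 0 ≤ g x := by
    intro x hx
    have hdiv : 0 ≤ g x / x := by
      refine ge_of_tendsto (slope_tendsto_aux hlim hx.1) ?_
      filter_upwards [Ioo_mem_nhdsGT_of_mem ⟨le_refl (0:ℝ), hx.1⟩] with s hs
      obtain ⟨k, hk⟩ := hslope s ⟨hs.1, hs.2.trans hx.2⟩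
      have h0 : (0:ℝ) ≤ (k:ℝ)/N := by positivity
      exact h0.trans (deriv_le_slope hconv ⟨hs.1, hs.2.trans hx.2⟩ ⟨hx.1, hx.2.le⟩ hs.2 hk)
    have := mul_nonneg hdiv hx.1.le
    rwa [div_mul_cancel₀ _ hx.1.ne'] at this
  intro r hr
  obtain ⟨hr0, hrB⟩ := hr
  have hrR' : r < R' := lt_of_le_of_lt hrB (by linarith)
  have hrR : r < R := lt_of_lt_of_le hrR' hR'R
  have hge : 0 ≤ g r := hnonneg r ⟨hr0, hrR⟩
  -- show g r ≤ 0 by contradiction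
  by_contra hne
  have hpos : 0 < g r := lt_of_le_of_ne hge (fun h => hne h.symm)
  obtain ⟨k, hk⟩ := hslope r ⟨hr0, hrR⟩
  -- g r / r ≤ k / N
  have h1 : g r / r ≤ (k:ℝ)/N := by
    refine le_of_tendsto (slope_tendsto_aux hlim hr0) ?_
    filter_upwards [Ioo_mem_nhdsGT_of_mem ⟨le_refl (0:ℝ), hr0⟩] with s hs
    exact slope_le_deriv hconv ⟨hs.1, (hs.2.trans hrR).le⟩ ⟨hr0, hrR⟩ hs.2 hk
  have hkpos : (0:ℝ) < (k:ℝ)/N := lt_of_lt_of_le (div_pos hpos hr0) h1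
  have hk1 : (1:ℝ) ≤ (k:ℝ) := by
    by_contra h
    push_neg at h
    have : k = 0 := by exact_mod_cast Nat.lt_one_iff.mp (by exact_mod_cast h)
    simp [this] at hkpos
  have hkN : (1:ℝ)/N ≤ (k:ℝ)/N := by gcongr
  -- k/N ≤ slope from r to R'
  have h2 : (k:ℝ)/N ≤ (g R' - g r) / (R' - r) :=
    deriv_le_slope hconv ⟨hr0, hrR⟩ ⟨hR'0, hR'R⟩ hrR' hk
  rw [le_div_iff₀ (by linarith : (0:ℝ) < R' - r)] at h2
  have h3 : (1:ℝ)/N * ((N:ℝ)*d) ≤ (k:ℝ)/N * (R' - r) :=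
    mul_le_mul hkN (by linarith) (by positivity) (by positivity)
  have h4 : (1:ℝ)/N * ((N:ℝ)*d) = d := by field_simp
  linarith
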